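/- The Gaussian expectation is the unique linear functional E on the space of polynomials with complex coefficients such that E(1) = 1 and E(q′ − X·q) = 0 for every polynomial q with complex coefficients. -/

import Mathlib

open Polynomial MeasureTheory Filter Real Set

lemma exp_arg (x : ℝ) : Real.exp (-x ^ 2 / 2) = Real.exp (-(1/2) * x ^ 2) := by ring_nf

lemma int_pow_exp (n : ℕ) : Integrable (fun x : ℝ => x ^ n * Real.exp (-x ^ 2 / 2)) := by
  have h := integrable_rpow_mul_exp_neg_mul_sq (b := 1/2) one_half_pos
    (s := (n : ℝ)) (lt_of_lt_of_le neg_one_lt_zero (Nat.cast_nonneg n))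
  simpa [Real.rpow_natCast, exp_arg] using h

lemma integrable_poly (p : Polynomial ℂ) :
    Integrable (fun x : ℝ => p.eval (x : ℂ) * (Real.exp (-x ^ 2 / 2) : ℂ)) := by
  induction p using Polynomial.induction_on' with
  | add p q hp hq => simpa [add_mul, Pi.add_def] using hp.add hq
  | monomial n a =>
    have h : Integrable (fun x : ℝ =>
        a * (((x ^ n * Real.exp (-x ^ 2 / 2) : ℝ) : ℂ))) :=
      ((int_pow_exp n).ofReal.const_mul a)
    refine h.congr (Eventually.of_forall fun x => ?_)
    push_cast
    simp [Polynomial.eval_monomial]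
    ring

lemma tendsto_poly (p : Polynomial ℂ) :
    Tendsto (fun x : ℝ => p.eval (x : ℂ) * (Real.exp (-x ^ 2 / 2) : ℂ))
      (cocompact ℝ) (nhds 0) := by
  induction p using Polynomial.induction_on' with
  | add p q hp hq =>
    simpa [add_mul] using hp.add hq
  | monomial n a =>
    have h : Tendsto (fun x : ℝ => |x| ^ (n : ℝ) * Real.exp (-(1/2) * x ^ 2))
        (cocompact ℝ) (nhds 0) :=
      tendsto_rpow_abs_mul_exp_neg_mul_sq_cocompact one_half_pos (n : ℝ)
    have h2 : Tendsto (fun x : ℝ =>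
        (monomial n a).eval (x : ℂ) * (Real.exp (-x ^ 2 / 2) : ℂ))
        (cocompact ℝ) (nhds 0) := by
      apply squeeze_zero_norm (a := fun x : ℝ => ‖a‖ * (|x| ^ (n : ℝ) * Real.exp (-(1/2) * x ^ 2)))
      · intro x
        simp only [Polynomial.eval_monomial, norm_mul, Real.rpow_natCast]
        rw [Complex.norm_real, Real.norm_eq_abs, Real.abs_exp, ← abs_pow, exp_arg]
        rw [mul_assoc]
        simp [norm_pow, Complex.norm_real, abs_pow]
      · simpa using h.const_mul ‖a‖
    exact h2

lemma hasDerivAt_poly (q : Polynomial ℂ) (x : ℝ) :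
    HasDerivAt (fun y : ℝ => q.eval (y : ℂ) * (Real.exp (-y ^ 2 / 2) : ℂ))
      (((derivative q).eval (x : ℂ) - (x : ℂ) * q.eval (x : ℂ)) * (Real.exp (-x ^ 2 / 2) : ℂ)) x := by
  have h1 : HasDerivAt (fun y : ℝ => q.eval (y : ℂ)) ((derivative q).eval (x : ℂ)) x :=
    (q.hasDerivAt (x : ℂ)).comp_ofReal
  have h2r : HasDerivAt (fun y : ℝ => Real.exp (-y ^ 2 / 2)) (-x * Real.exp (-x ^ 2 / 2)) x := by
    have hu : HasDerivAt (fun y : ℝ => -y ^ 2 / 2) (-x) x := by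
      have := ((hasDerivAt_pow 2 x).neg.div_const 2)
      refine this.congr_deriv ?_
      ring
    have := (Real.hasDerivAt_exp (-x ^ 2 / 2)).comp x hu
    refine this.congr_deriv ?_
    ring
  have h2 : HasDerivAt (fun y : ℝ => ((Real.exp (-y ^ 2 / 2) : ℝ) : ℂ))
      (((-x * Real.exp (-x ^ 2 / 2) : ℝ) : ℂ)) x := h2r.ofReal_comp
  have := h1.mul h2
  refine this.congr_deriv ?_
  push_cast
  ring

lemma integral_byparts (q : Polynomial ℂ) :
    (∫ x : ℝ, (derivative q - X * q).eval (x : ℂ) * (Real.exp (-x ^ 2 / 2) : ℂ)) = 0 := by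
  set f : ℝ → ℂ := fun x => q.eval (x : ℂ) * (Real.exp (-x ^ 2 / 2) : ℂ) with hf
  set g : ℝ → ℂ := fun x => (derivative q - X * q).eval (x : ℂ) * (Real.exp (-x ^ 2 / 2) : ℂ) with hg
  have hderiv : ∀ x : ℝ, HasDerivAt f (g x) x := by
    intro x
    simp only [hf, hg, Polynomial.eval_sub, Polynomial.eval_mul, Polynomial.eval_X]
    exact hasDerivAt_poly q x
  have hint : Integrable g := integrable_poly _
  have htop : Tendsto f atTop (nhds 0) := (tendsto_poly q).mono_left _root_.atTop_le_cocompact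
  have hbot : Tendsto f atBot (nhds 0) := (tendsto_poly q).mono_left _root_.atBot_le_cocompact
  have hIic : ∫ x in Iic (0:ℝ), g x = f 0 - 0 :=
    integral_Iic_of_hasDerivAt_of_tendsto' (fun x _ => hderiv x) hint.integrableOn hbot
  have hIoi : ∫ x in Ioi (0:ℝ), g x = 0 - f 0 :=
    integral_Ioi_of_hasDerivAt_of_tendsto' (fun x _ => hderiv x) hint.integrableOn htop
  have hsplit : (∫ x : ℝ, g x) = (∫ x in Iic (0:ℝ), g x) + ∫ x in Ioi (0:ℝ), g x := by
    rw [← setIntegral_union (Iic_disjoint_Ioi le_rfl) measurableSet_Ioi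
      hint.integrableOn hint.integrableOn, Iic_union_Ioi, setIntegral_univ]
  rw [hsplit, hIic, hIoi]
  ring

noncomputable def gaussianExpectation (p : Polynomial ℂ) : ℂ :=
  (∫ x : ℝ, p.eval (x : ℂ) * Real.exp (-x ^ 2 / 2)) /
    (∫ x : ℝ, (Real.exp (-x ^ 2 / 2) : ℂ))

lemma denom_ne_zero : (∫ x : ℝ, (Real.exp (-x ^ 2 / 2) : ℂ)) ≠ 0 := by
  have hco : (∫ x : ℝ, (Real.exp (-x ^ 2 / 2) : ℂ)) =
      ((∫ x : ℝ, Real.exp (-x ^ 2 / 2) : ℝ) : ℂ) := integral_ofReal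
  rw [hco]
  have : (∫ x : ℝ, Real.exp (-x ^ 2 / 2)) = Real.sqrt (π / (1/2)) := by
    rw [← integral_gaussian (1/2)]
    congr 1 with x
    rw [exp_arg]
  rw [this]
  simp only [ne_eq, Complex.ofReal_eq_zero]
  positivity

lemma gE_one : gaussianExpectation 1 = 1 := by
  unfold gaussianExpectation
  rw [div_eq_one_iff_eq denom_ne_zero]
  simp

lemma gE_zero (q : Polynomial ℂ) : gaussianExpectation (derivative q - X * q) = 0 := by
  unfold gaussianExpectation
  rw [integral_byparts, zero_div]

lemma gE_add (p r : Polynomial ℂ) :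
    gaussianExpectation (p + r) = gaussianExpectation p + gaussianExpectation r := by
  unfold gaussianExpectation
  rw [← add_div]
  congr 1
  rw [← integral_add (integrable_poly p) (integrable_poly r)]
  congr 1 with x
  simp [add_mul]

lemma gE_smul (c : ℂ) (p : Polynomial ℂ) :
    gaussianExpectation (c • p) = c * gaussianExpectation p := by
  unfold gaussianExpectation
  rw [← mul_div_assoc]
  congr 1
  rw [← integral_const_mul]
  congr 1 with x
  simp [Polynomial.eval_smul, smul_eq_mul, mul_assoc]

lemma pow_identity (m : ℕ) :
    (X : Polynomial ℂ) ^ (m + 1) =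
      (derivative (-(X ^ m : Polynomial ℂ)) - X * (-(X ^ m))) + (m : ℂ) • X ^ (m - 1) := by
  rw [derivative_neg, derivative_X_pow, smul_eq_C_mul]
  ring

theorem gaussian_expectation_unique :
    gaussianExpectation 1 = 1 ∧
    (∀ q : Polynomial ℂ, gaussianExpectation (derivative q - X * q) = 0) ∧
    (∀ L : Polynomial ℂ →ₗ[ℂ] ℂ, L 1 = 1 →
      (∀ q : Polynomial ℂ, L (derivative q - X * q) = 0) →
      ∀ p : Polynomial ℂ, L p = gaussianExpectation p) := by
  refine ⟨gE_one, gE_zero, ?_⟩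
  intro L hL1 hLz p
  have key : ∀ n : ℕ, L ((X : Polynomial ℂ) ^ n) = gaussianExpectation (X ^ n) := by
    intro n
    induction n using Nat.strong_induction_on with
    | _ n ih =>
      match n with
      | 0 => simpa using hL1.trans gE_one.symm
      | Nat.succ m =>
        have hm : m - 1 < m + 1 := lt_of_le_of_lt (Nat.sub_le m 1) (Nat.lt_succ_self m)
        rw [pow_identity m]
        rw [map_add, L.map_smul, smul_eq_mul, gE_add, gE_smul, hLz, gE_zero, ih (m-1) hm]
  induction p using Polynomial.induction_on' with
  | add p q hp hq => rw [map_add, gE_add, hp, hq]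
  | monomial n a =>
    have : (monomial n a : Polynomial ℂ) = a • X ^ n := by
      rw [smul_eq_C_mul, C_mul_X_pow_eq_monomial]
    rw [this, L.map_smul, smul_eq_mul, gE_smul, key n]
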